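/- The set S = {(x₁, x₂) ∈ ℝ² : (x₁ - x₂)^4 + (x₁ + x₂)^2 ≤ 1} is compact, while for every ε > 0 the perturbed set S_ε = {(x₁, x₂) ∈ ℝ² : (x₁ - x₂)^4 - ε·x₁^4 + (x₁ + x₂)^2 ≤ 1} is unbounded. -/

import Mathlib

theorem compact_but_not_stably_compact_example :
    IsCompact {x : EuclideanSpace ℝ (Fin 2) | (x 0 - x 1) ^ 4 + (x 0 + x 1) ^ 2 ≤ 1} ∧
    ∀ ε : ℝ, 0 < ε →
      ¬ Bornology.IsBounded
        {x : EuclideanSpace ℝ (Fin 2) |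
          (x 0 - x 1) ^ 4 - ε * x 0 ^ 4 + (x 0 + x 1) ^ 2 ≤ 1} := by
  constructor
  · apply Metric.isCompact_of_isClosed_isBounded
    · have : {x : EuclideanSpace ℝ (Fin 2) | (x 0 - x 1) ^ 4 + (x 0 + x 1) ^ 2 ≤ 1} =
        (fun x : EuclideanSpace ℝ (Fin 2) => (x 0 - x 1) ^ 4 + (x 0 + x 1) ^ 2) ⁻¹'
          Set.Iic 1 := rfl
      rw [this]
      exact IsClosed.preimage (by fun_prop) isClosed_Iic
    · rw [isBounded_iff_forall_norm_le]
      refine ⟨2, fun x hx => ?_⟩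
      simp only [Set.mem_setOf_eq] at hx
      rw [EuclideanSpace.norm_eq]
      have h2 : x 0 ^ 2 + x 1 ^ 2 ≤ 4 := by
        nlinarith [sq_nonneg ((x 0 - x 1) ^ 2 - 1), sq_nonneg (x 0 + x 1),
          sq_nonneg (x 0 - x 1), sq_nonneg ((x 0 - x 1) ^ 2)]
      have : Real.sqrt (∑ i, ‖x i‖ ^ 2) ≤ Real.sqrt 4 := by
        apply Real.sqrt_le_sqrt
        simp [Fin.sum_univ_two, Real.norm_eq_abs, sq_abs]
        linarith
      calc Real.sqrt (∑ i, ‖x i‖ ^ 2) ≤ Real.sqrt 4 := this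
        _ = 2 := by
          rw [show (4 : ℝ) = 2 ^ 2 by norm_num, Real.sqrt_sq (by norm_num)]
  · intro ε hε hb
    rw [isBounded_iff_forall_norm_le] at hb
    obtain ⟨C, hC⟩ := hb
    set t : ℝ := max (|C| + 1) (max (2 / ε) 2) with ht
    have ht2 : (2 : ℝ) ≤ t := le_trans (le_max_right _ _) (le_max_right _ _)
    have htε : 2 / ε ≤ t := le_trans (le_max_left _ _) (le_max_right _ _)
    have htC : |C| + 1 ≤ t := le_max_left _ _
    have hεt : 2 ≤ ε * t := by
      rw [div_le_iff₀ hε] at htε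
      linarith [mul_comm t ε]
    have hεt2 : 4 ≤ ε * t ^ 2 := by nlinarith
    set p : EuclideanSpace ℝ (Fin 2) := WithLp.toLp 2 (fun _ => t) with hp
    have hmem : p ∈ {x : EuclideanSpace ℝ (Fin 2) |
        (x 0 - x 1) ^ 4 - ε * x 0 ^ 4 + (x 0 + x 1) ^ 2 ≤ 1} := by
      simp only [Set.mem_setOf_eq, hp]
      have : (t - t) ^ 4 - ε * t ^ 4 + (t + t) ^ 2 = t ^ 2 * (4 - ε * t ^ 2) := by ring
      rw [this]
      nlinarith
    have hnorm := hC p hmem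
    have : t ≤ ‖p‖ := by
      rw [EuclideanSpace.norm_eq]
      have : p 0 = t := rfl
      calc t = Real.sqrt (t ^ 2) := (Real.sqrt_sq (by linarith)).symm
        _ ≤ Real.sqrt (∑ i, ‖p i‖ ^ 2) := by
            apply Real.sqrt_le_sqrt
            simp [Fin.sum_univ_two, hp, Real.norm_eq_abs, sq_abs]
            nlinarith [sq_nonneg t]
    have : t ≤ C := le_trans this hnorm
    have : C ≤ |C| := le_abs_self C
    linarith
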